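/- Let L be a finitely generated free abelian group (a lattice) with an involution σ : L → L (σ² = id). Then the torsion subgroup of the quotient L / (1−σ)L equals the image of the (−1)-eigenlattice L^{−σ} = {x ∈ L : σ(x) = −x} in L / (1−σ)L. -/

import Mathlib

/-- Let `L` be a lattice (finitely generated free abelian group) with an involution `σ`.
The torsion subgroup of `L/(1−σ)L` equals the image of the `(−1)`-eigenlattice
`L^{−σ} = {x ∈ L : σ x = −x}` in `L/(1−σ)L`: a class `q` is torsion iff it is
represented by an element negated by `σ`. -/
theorem torsion_of_quotient_eq_image_neg_eigenlattice
    (L : Type*) [AddCommGroup L] [Module ℤ L] [Module.Free ℤ L] [Module.Finite ℤ L]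
    (σ : L →ₗ[ℤ] L) (hσ : ∀ x, σ (σ x) = x)
    (q : L ⧸ LinearMap.range (LinearMap.id - σ)) :
    (∃ n : ℕ, 0 < n ∧ n • q = 0) ↔
      ∃ x : L, σ x = -x ∧ Submodule.Quotient.mk x = q := by
  constructor
  · rintro ⟨n, hn, hnq⟩
    obtain ⟨x, rfl⟩ := Submodule.Quotient.mk_surjective _ q
    have hx : n • x ∈ LinearMap.range (LinearMap.id - σ) := by
      rw [← Submodule.Quotient.mk_eq_zero]
      rw [show (Submodule.Quotient.mk (n • x) :
            L ⧸ LinearMap.range (LinearMap.id - σ)) =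
          n • Submodule.Quotient.mk x from
        map_nsmul (Submodule.mkQ _) n x]
      exact hnq
    obtain ⟨y, hy⟩ := hx
    simp only [LinearMap.sub_apply, LinearMap.id_apply] at hy
    have h2 : n • σ x = σ y - y := by
      have := congrArg σ hy
      rw [map_sub, hσ, map_nsmul] at this
      exact this.symm
    have h3 : n • (x + σ x) = 0 := by
      rw [show n • (x + σ x) = n • x + n • σ x from smul_add n x (σ x),
        h2, ← hy]
      abel
    have h3' : _ = (0 : L) := (Nat.cast_smul_eq_nsmul ℤ n (x + σ x)).trans h3
    have h4 : x + σ x = 0 :=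
      (smul_eq_zero.mp
        h3').resolve_left (Int.natCast_ne_zero.mpr hn.ne')
    exact ⟨x, by linear_combination (norm := abel) h4, rfl⟩
  · rintro ⟨x, hx, rfl⟩
    refine ⟨2, by norm_num, ?_⟩
    rw [show ((2 : ℕ) • Submodule.Quotient.mk x :
          L ⧸ LinearMap.range (LinearMap.id - σ)) =
        Submodule.Quotient.mk ((2 : ℕ) • x) from
      (map_nsmul (Submodule.mkQ _) 2 x).symm]
    rw [Submodule.Quotient.mk_eq_zero]
    exact ⟨x, by simp [hx, two_smul]⟩
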